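/- Let K be a real 4×4 orthogonal symplectic matrix, r ≥ 0, V_in = diag(e^{−2r}, e^{2r}, e^{−2r}, e^{2r}) (equal squeezing), and V = K·V_in·Kᵀ with upper-left 2×2 block V₁. Let g₁, g₂ be real, G = diag(g₁, g₁, g₂, g₂), and H := (Tr((V·G)²) − Tr(G²))/2. Then with n := sinh²(r) and H_sqz(n) := 8n² + 8n, H = (g₁² + g₂²)·H_sqz(n) − (g₁ − g₂)²·(det(V₁) − 1). -/

import Mathlib

open Matrix

noncomputable section

/-- The 2N×2N symplectic form: N diagonal copies of `J = [[0,1],[-1,0]]`.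
Modes are indexed by `Fin N`, each contributing two coordinates indexed by `Fin 2`. -/
def Omega (N : ℕ) : Matrix (Fin N × Fin 2) (Fin N × Fin 2) ℝ :=
  Matrix.of fun p q => if p.1 = q.1 then !![(0 : ℝ), 1; -1, 0] p.2 q.2 else 0

/-- The covariance matrix `diag(e^{−2r₁}, e^{2r₁}, …, e^{−2r_N}, e^{2r_N})` of N independent
squeezed states with squeezing levels `r a`. -/
def VIn {N : ℕ} (r : Fin N → ℝ) : Matrix (Fin N × Fin 2) (Fin N × Fin 2) ℝ :=
  Matrix.diagonal fun p => Real.exp ((if p.2 = 0 then (-2 : ℝ) else 2) * r p.1)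

/-- The a-th diagonal 2×2 block of a 2N×2N matrix. -/
def dblock {N : ℕ} (V : Matrix (Fin N × Fin 2) (Fin N × Fin 2) ℝ) (a : Fin N) :
    Matrix (Fin 2) (Fin 2) ℝ :=
  Matrix.of fun i j => V (a, i) (a, j)

/-- The phase-shift generator `G = diag(g₁, g₁, …, g_N, g_N)`. -/
def Gmat {N : ℕ} (g : Fin N → ℝ) : Matrix (Fin N × Fin 2) (Fin N × Fin 2) ℝ :=
  Matrix.diagonal fun p => g p.1

/-- The QFI functional `H(V, G) := (Tr((V·G)²) − Tr(G²))/2`. -/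
def qfi {N : ℕ} (V G : Matrix (Fin N × Fin 2) (Fin N × Fin 2) ℝ) : ℝ :=
  (Matrix.trace ((V * G) ^ 2) - Matrix.trace (G ^ 2)) / 2

/-- `H_sqz(n) = 8n² + 8n`, the QFI of a single-mode squeezed state of mean photon number n. -/
def Hsqz (n : ℝ) : ℝ := 8 * n ^ 2 + 8 * n

set_option maxHeartbeats 2000000 in
/-- equally squeezed two-mode trade-off formula (Eq. 11 of the paper). For a 4×4
orthogonal symplectic `K`, `V = K·diag(e^{−2r}, e^{2r}, e^{−2r}, e^{2r})·Kᵀ` with upper-left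
block `V₁`, and `G = diag(g₁, g₁, g₂, g₂)`, the QFI `H = (Tr((V·G)²) − Tr(G²))/2` satisfies
`H = (g₁² + g₂²)·H_sqz(n) − (g₁ − g₂)²·(det(V₁) − 1)` with `n = sinh²(r)`. -/
theorem stmt_9 (K : Matrix (Fin 2 × Fin 2) (Fin 2 × Fin 2) ℝ)
    (hKorth : Kᵀ * K = 1) (hKsymp : K * Omega 2 * Kᵀ = Omega 2)
    (r : ℝ) (hr : 0 ≤ r)
    (V : Matrix (Fin 2 × Fin 2) (Fin 2 × Fin 2) ℝ)
    (hVdef : V = K * VIn ![r, r] * Kᵀ)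
    (g₁ g₂ : ℝ) :
    qfi V (Gmat ![g₁, g₂])
      = (g₁ ^ 2 + g₂ ^ 2) * Hsqz (Real.sinh r ^ 2)
        - (g₁ - g₂) ^ 2 * ((dblock V 0).det - 1) := by

  -- auxiliary scalars
  set c := Real.cosh (2*r) with hcdef
  set s := Real.sinh (2*r) with hsdef
  have hc : c^2 = 1 + s^2 := by rw [hcdef, hsdef, Real.cosh_sq]; ring
  have hH : Hsqz (Real.sinh r ^ 2) = 2 * s^2 := by
    have h1 : s = 2 * Real.sinh r * Real.cosh r := Real.sinh_two_mul r
    have h2 : Real.cosh r ^ 2 = Real.sinh r ^ 2 + 1 := Real.cosh_sq r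
    rw [Hsqz, h1]; nlinarith [h2]
  -- the diagonal sign matrix D and M := K D Kᵀ
  set D : Matrix (Fin 2 × Fin 2) (Fin 2 × Fin 2) ℝ :=
    Matrix.diagonal (fun p : Fin 2 × Fin 2 => if p.2 = 0 then (-1:ℝ) else 1) with hD
  have hKK : K * Kᵀ = 1 := mul_eq_one_comm.mp hKorth
  set M : Matrix (Fin 2 × Fin 2) (Fin 2 × Fin 2) ℝ := K * D * Kᵀ with hM
  have hDD : D * D = 1 := by
    rw [hD, Matrix.diagonal_mul_diagonal]
    convert Matrix.diagonal_one
    split <;> norm_num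
  have hM2 : M * M = 1 := by
    rw [hM]
    calc K * D * Kᵀ * (K * D * Kᵀ) = K * (D * ((Kᵀ * K) * (D * Kᵀ))) := by
          simp only [Matrix.mul_assoc]
      _ = 1 := by rw [hKorth, one_mul, ← Matrix.mul_assoc D D Kᵀ, hDD, one_mul, hKK]
  have hMsym : Mᵀ = M := by
    rw [hM, hD]
    simp [Matrix.transpose_mul, Matrix.diagonal_transpose, Matrix.mul_assoc]
  have hKO : K * Omega 2 = Omega 2 * K := by
    have h := congrArg (· * K) hKsymp
    simpa [Matrix.mul_assoc, hKorth] using h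
  have hOT : (Omega 2)ᵀ = -(Omega 2) := by
    ext p q
    fin_cases p <;> fin_cases q <;> simp [Omega]
  have hKtO : Kᵀ * Omega 2 = Omega 2 * Kᵀ := by
    have h := congrArg Matrix.transpose hKO
    simp only [Matrix.transpose_mul, hOT, Matrix.neg_mul, Matrix.mul_neg] at h
    exact (neg_inj.mp h).symm
  have hDO : D * Omega 2 = -(Omega 2 * D) := by
    ext p q
    fin_cases p <;> fin_cases q <;>
      simp [Omega, Matrix.mul_apply, Fintype.sum_prod_type, Fin.sum_univ_two, hD,
        Matrix.diagonal] <;> decide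
  have hMO : M * Omega 2 = -(Omega 2 * M) := by
    rw [hM]
    calc K * D * Kᵀ * Omega 2 = K * D * (Kᵀ * Omega 2) := by rw [Matrix.mul_assoc]
      _ = K * (D * Omega 2) * Kᵀ := by rw [hKtO, ← Matrix.mul_assoc, ← Matrix.mul_assoc]
      _ = -(K * Omega 2 * (D * Kᵀ)) := by
          rw [hDO]
          simp only [Matrix.mul_neg, Matrix.neg_mul, Matrix.mul_assoc]
      _ = -(Omega 2 * (K * D * Kᵀ)) := by rw [hKO]; simp only [Matrix.mul_assoc]
  -- V = c • 1 + s • M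
  have hVin : VIn ![r,r] = c • (1 : Matrix (Fin 2 × Fin 2) (Fin 2 × Fin 2) ℝ) + s • D := by
    have h1 : c - s = Real.exp (-(2*r)) := Real.cosh_sub_sinh (2*r)
    have h2 : c + s = Real.exp (2*r) := Real.cosh_add_sinh (2*r)
    ext p q
    by_cases h : p = q
    · subst h
      fin_cases p <;>
        simp [VIn, hD, Matrix.diagonal_apply_eq, Matrix.one_apply] <;> linarith
    · simp [VIn, hD, Matrix.diagonal_apply_ne _ h, Matrix.one_apply_ne h]
  have hV : V = c • (1 : Matrix (Fin 2 × Fin 2) (Fin 2 × Fin 2) ℝ) + s • M := by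
    rw [hVdef, hVin, hM]
    rw [Matrix.mul_add, Matrix.add_mul]
    congr 1
    · rw [mul_smul_comm, smul_mul_assoc, Matrix.mul_one, hKK]
    · rw [mul_smul_comm, smul_mul_assoc]
  clear hVdef
  rw [hH]
  -- extract scalar equations for the entries of M
  have sym : ∀ p q : Fin 2 × Fin 2, M q p = M p q := fun p q => congrFun (congrFun hMsym p) q
  have a1 := congrFun (congrFun hMO ((0:Fin 2),(0:Fin 2))) ((0:Fin 2),(1:Fin 2))
  have a2 := congrFun (congrFun hMO ((1:Fin 2),(0:Fin 2))) ((1:Fin 2),(1:Fin 2))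
  simp [Omega, Matrix.mul_apply, Fintype.sum_prod_type, Fin.sum_univ_two] at a1 a2
  have r0 := congrFun (congrFun hM2 ((0:Fin 2),(0:Fin 2))) ((0:Fin 2),(0:Fin 2))
  have r1 := congrFun (congrFun hM2 ((0:Fin 2),(1:Fin 2))) ((0:Fin 2),(1:Fin 2))
  have r2 := congrFun (congrFun hM2 ((1:Fin 2),(0:Fin 2))) ((1:Fin 2),(0:Fin 2))
  have r3 := congrFun (congrFun hM2 ((1:Fin 2),(1:Fin 2))) ((1:Fin 2),(1:Fin 2))
  simp [Matrix.mul_apply, Fintype.sum_prod_type, Fin.sum_univ_two, Matrix.one_apply] at r0 r1 r2 r3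
  rw [hV]
  simp only [qfi, Gmat, dblock, Matrix.trace, Matrix.diag, pow_two, Matrix.mul_apply,
    Fintype.sum_prod_type, Fin.sum_univ_two, Matrix.add_apply, Matrix.smul_apply,
    Matrix.one_apply, Matrix.diagonal_apply, Matrix.of_apply, Matrix.det_fin_two,
    smul_eq_mul]
  norm_num [Prod.ext_iff]
  have s01 := sym ((0:Fin 2),(0:Fin 2)) ((0:Fin 2),(1:Fin 2))
  have s02 := sym ((0:Fin 2),(0:Fin 2)) ((1:Fin 2),(0:Fin 2))
  have s03 := sym ((0:Fin 2),(0:Fin 2)) ((1:Fin 2),(1:Fin 2))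
  have s12 := sym ((0:Fin 2),(1:Fin 2)) ((1:Fin 2),(0:Fin 2))
  have s13 := sym ((0:Fin 2),(1:Fin 2)) ((1:Fin 2),(1:Fin 2))
  have s23 := sym ((1:Fin 2),(0:Fin 2)) ((1:Fin 2),(1:Fin 2))
  simp only [Prod.mk_zero_zero, Prod.mk_one_one] at s01 s02 s03 s12 s13 s23 a1 a2
  simp only [Prod.mk_zero_zero, Prod.mk_one_one] at r0 r1 r2 r3 ⊢
  simp only [s01, s02, s03, s12, s13, s23, a1, a2] at r0 r1 r2 r3 ⊢
  linear_combination (g₁^2 + g₂^2 + (g₁ - g₂)^2) * hc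
    + (s^2 * g₂ * (2*g₁ - g₂) / 2) * r0 + (s^2 * g₂ * (2*g₁ - g₂) / 2) * r1
    + (s^2 * g₂^2 / 2) * r2 + (s^2 * g₂^2 / 2) * r3
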